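/- Let A be a trim deterministic block automaton over a finite alphabet Σ and let R be a transverse non re-entering component of A. Then for any two states p, q ∈ R, L(p) = L(q) if and only if Lin_R(p) = Lin_R(q). -/

import Mathlib

set_option autoImplicit false

/-- A block automaton over an alphabet `α`: a set of initial states, a set of final
states, and a set of transitions labeled by words over `α`. -/
structure BlockAutomaton (α : Type) (Q : Type) where
  init : Set Q
  final : Set Q
  trans : Set (Q × List α × Q)

namespace BlockAutomaton

variable {α Q : Type}

/-- Well-formedness: the transition set is finite and every label is a block
(a nonempty word). -/
def IsWF (A : BlockAutomaton α Q) : Prop :=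
  A.trans.Finite ∧ ∀ t ∈ A.trans, t.2.1 ≠ ([] : List α)

/-- The transitive closure `δ*` of the transition relation. -/
inductive Path (A : BlockAutomaton α Q) : Q → List α → Q → Prop
  | refl (p : Q) : Path A p [] p
  | step {p r q : Q} {b u : List α} :
      (p, b, r) ∈ A.trans → Path A r u q → Path A p (b ++ u) q

/-- The right language of a state. -/
def rightLang (A : BlockAutomaton α Q) (q : Q) : Language α :=
  {w | ∃ f ∈ A.final, A.Path q w f}

/-- The language recognized by the automaton. -/
def lang (A : BlockAutomaton α Q) : Language α :=
  {w | ∃ i ∈ A.init, ∃ f ∈ A.final, A.Path i w f}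

/-- Deterministic: a unique initial state, and the labels of two distinct transitions
going out of the same state are never prefixes of one another. -/
def Deterministic (A : BlockAutomaton α Q) : Prop :=
  (∃ i, A.init = {i}) ∧
    ∀ p b₁ q₁ b₂ q₂, (p, b₁, q₁) ∈ A.trans → (p, b₂, q₂) ∈ A.trans →
      (b₁, q₁) ≠ (b₂, q₂) → ¬ b₁ <+: b₂

/-- Trim: every state is accessible and co-accessible. -/
def Trim (A : BlockAutomaton α Q) : Prop :=
  ∀ q : Q, (∃ i ∈ A.init, ∃ u, A.Path i u q) ∧ (∃ f ∈ A.final, ∃ v, A.Path q v f)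

/-- `k`-block: every transition label has length at most `k`. -/
def KBlock (A : BlockAutomaton α Q) (k : ℕ) : Prop :=
  ∀ t ∈ A.trans, t.2.1.length ≤ k

/-- Compact: no two distinct states have the same right language. -/
def Compact (A : BlockAutomaton α Q) : Prop :=
  ∀ p q : Q, A.rightLang p = A.rightLang q → p = q

/-- Left quotient `u⁻¹L` of a language by a word. -/
def leftQuot (u : List α) (L : Language α) : Language α := {w | u ++ w ∈ L}

/-- Residual: every right language is a left quotient of the recognized language. -/
def Residual (A : BlockAutomaton α Q) : Prop :=
  ∀ p : Q, ∃ u : List α, A.rightLang p = leftQuot u A.lang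

/-- L-equivalence: same language and same family of right languages. -/
def LEquiv {Q₁ Q₂ : Type} (A : BlockAutomaton α Q₁) (B : BlockAutomaton α Q₂) : Prop :=
  A.lang = B.lang ∧ Set.range A.rightLang = Set.range B.rightLang

/-- The set of final labels FB(A). -/
def finalLabels (A : BlockAutomaton α Q) : Set (List α) :=
  {b | ∃ f ∈ A.final, ∃ q, (f, b, q) ∈ A.trans}

/-- The set of consistency C(A): pairs (b, s) with b a block such that every final
state has a transition labeled b to s. -/
def consist (A : BlockAutomaton α Q) : Set (List α × Q) :=
  {bs | bs.1 ≠ [] ∧ ∀ f ∈ A.final, (f, bs.1, bs.2) ∈ A.trans}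

/-- The (b,s)-cut: remove every transition (f, b, s) with f final. -/
def cut (A : BlockAutomaton α Q) (b : List α) (s : Q) : BlockAutomaton α Q :=
  ⟨A.init, A.final, {t ∈ A.trans | ¬(t.1 ∈ A.final ∧ t.2.1 = b ∧ t.2.2 = s)}⟩

/-- (b, s) is a vacant pair: b is a block and no final state has a transition
labeled b to s. -/
def Vacant (A : BlockAutomaton α Q) (b : List α) (s : Q) : Prop :=
  b ≠ [] ∧ ∀ f ∈ A.final, (f, b, s) ∉ A.trans

/-- The (b,s)-add: add the transition (f, b, s) for every final state f. -/
def add (A : BlockAutomaton α Q) (b : List α) (s : Q) : BlockAutomaton α Q :=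
  ⟨A.init, A.final, A.trans ∪ {t | t.1 ∈ A.final ∧ t.2.1 = b ∧ t.2.2 = s}⟩

/-- The underlying edge relation of the automaton. -/
def Edge (A : BlockAutomaton α Q) (p q : Q) : Prop := ∃ b, (p, b, q) ∈ A.trans

/-- Reachability. -/
def Reach (A : BlockAutomaton α Q) : Q → Q → Prop := Relation.ReflTransGen A.Edge

/-- The orbit (strongly connected component) of a state. -/
def orbitOf (A : BlockAutomaton α Q) (q : Q) : Set Q := {p | A.Reach q p ∧ A.Reach p q}

/-- A set is an orbit if it is the strongly connected component of some state. -/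
def IsOrbit (A : BlockAutomaton α Q) (O : Set Q) : Prop := ∃ q, O = A.orbitOf q

/-- A trivial orbit: a single state with no self-loop. -/
def TrivialOrbit (A : BlockAutomaton α Q) (O : Set Q) : Prop :=
  ∃ p, O = {p} ∧ ∀ b, (p, b, p) ∉ A.trans

/-- A non re-entering component: a union of orbits such that no state outside
reachable from it can reach back. -/
def NonReentering (A : BlockAutomaton α Q) (R : Set Q) : Prop :=
  (∀ p ∈ R, A.orbitOf p ⊆ R) ∧
    ∀ r ∈ R, ∀ q, q ∉ R → A.Reach r q → ¬ A.Reach q r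

/-- A gate of R: a state of R that is final or the origin of an out-transition. -/
def IsGate (A : BlockAutomaton α Q) (R : Set Q) (g : Q) : Prop :=
  g ∈ R ∧ (g ∈ A.final ∨ ∃ b p, (g, b, p) ∈ A.trans ∧ p ∉ R)

/-- R is transverse: all gates agree on finality and on out-transitions. -/
def Transverse (A : BlockAutomaton α Q) (R : Set Q) : Prop :=
  ∀ g₁ g₂, A.IsGate R g₁ → A.IsGate R g₂ →
    (g₁ ∈ A.final ↔ g₂ ∈ A.final) ∧
      ∀ b p, p ∉ R → ((g₁, b, p) ∈ A.trans ↔ (g₂, b, p) ∈ A.trans)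

/-- The orbit property: every orbit is transverse. -/
def OrbitProperty (A : BlockAutomaton α Q) : Prop :=
  ∀ O : Set Q, A.IsOrbit O → A.Transverse O

/-- The restriction of the automaton to the internal transitions of R. -/
def internalAut (A : BlockAutomaton α Q) (R : Set Q) : BlockAutomaton α Q :=
  ⟨A.init, A.final, {t ∈ A.trans | t.1 ∈ R ∧ t.2.2 ∈ R}⟩

/-- The internal language of a state of R: words sending it to a gate of R
through internal transitions. -/
def Lin (A : BlockAutomaton α Q) (R : Set Q) (p : Q) : Language α :=
  {w | ∃ g, A.IsGate R g ∧ (A.internalAut R).Path p w g}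

/-- The external language of a state of R. -/
def Lext (A : BlockAutomaton α Q) (R : Set Q) (p : Q) : Language α :=
  {w | (p ∈ A.final ∧ w = []) ∨
    ∃ b q, (p, b, q) ∈ A.trans ∧ q ∉ R ∧ ∃ v, v ∈ A.rightLang q ∧ w = b ++ v}

/-- The external language of R: the (common, when R is transverse) external
language of the gates of R (empty if R has no gate). -/
def Lout (A : BlockAutomaton α Q) (R : Set Q) : Language α :=
  {w | ∃ g, A.IsGate R g ∧ w ∈ A.Lext R g}

/-- The automaton B_O of an orbit O used in the BW-test: transitions are the internal
transitions of O, final states are the gates of O (the initial states are irrelevant). -/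
def orbAut (A : BlockAutomaton α Q) (O : Set Q) : BlockAutomaton α Q :=
  ⟨A.init, {g | A.IsGate O g}, {t ∈ A.trans | t.1 ∈ O ∧ t.2.2 ∈ O}⟩

/-- Fuel-indexed version of the BW-test (each recursive call removes at least one
transition, so on automata with finitely many transitions the recursion needs only
finitely much fuel). -/
def BWTestFuel : ℕ → BlockAutomaton α Q → Prop
  | 0, _ => False
  | n + 1, A => A.OrbitProperty ∧
      ∀ O : Set Q, A.IsOrbit O → ¬ A.TrivialOrbit O →
        ∃ b s, (b, s) ∈ (A.orbAut O).consist ∧ BWTestFuel n ((A.orbAut O).cut b s)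

/-- The BW-test: A passes iff A has the orbit property and, for every nontrivial
orbit O of A, some consistent cut of the automaton B_O of the orbit passes the
BW-test (well-founded since every cut removes a transition; `BWTestFuel` is
monotone in the fuel, so the existential gives exactly this recursive predicate). -/
def BWTest (A : BlockAutomaton α Q) : Prop := ∃ n, BWTestFuel n A

/-- The orbit automaton Orb(A, q): states are the orbit of q, initial state q, final
states the gates of the orbit, transitions the internal transitions of the orbit. -/
def orbAutAt (A : BlockAutomaton α Q) (q : Q) :
    BlockAutomaton α {p : Q // p ∈ A.orbitOf q} where
  init := {x | x.val = q}
  final := {x | A.IsGate (A.orbitOf q) x.val}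
  trans := {t | (t.1.val, t.2.1, t.2.2.val) ∈ A.trans}

/-- The pathway function Δ. -/
def pathway (A : BlockAutomaton α Q) (p : Q) (u : List α) : Set (List α × Q) :=
  {vq | A.Path p (u ++ vq.1) vq.2 ∧
    ∀ x, x <+: vq.1 → x ≠ vq.1 → ∀ r, ¬ A.Path p (u ++ x) r}

/-- The states of the minimal DFA of L: the nonempty left quotients of L. -/
def QuotState (L : Language α) : Type :=
  {P : Language α // (∃ u : List α, P = leftQuot u L) ∧ ∃ w, w ∈ P}

/-- The minimal DFA of L. -/
def minDFA (L : Language α) : BlockAutomaton α (QuotState L) where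
  init := {P | P.val = L}
  final := {P | [] ∈ P.val}
  trans := {t | ∃ a : α, t.2.1 = [a] ∧ t.2.2.val = leftQuot [a] t.1.val}

/-- The k-transition automaton of L. -/
def kTransAut (L : Language α) (k : ℕ) : BlockAutomaton α (QuotState L) where
  init := (minDFA L).init
  final := (minDFA L).final
  trans := {t | (minDFA L).Path t.1 t.2.1 t.2.2 ∧ 1 ≤ t.2.1.length ∧ t.2.1.length ≤ k ∧
    ∀ u, u <+: t.2.1 → u ≠ [] → u ≠ t.2.1 → u ∉ t.1.val}

/-- B is isomorphic to a sub-automaton of T. -/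
def IsoToSub {Q₁ Q₂ : Type} (B : BlockAutomaton α Q₁) (T : BlockAutomaton α Q₂) : Prop :=
  ∃ φ : Q₁ → Q₂, Function.Injective φ ∧
    φ '' B.init ⊆ T.init ∧ φ '' B.final ⊆ T.final ∧
    ∀ p b q, (p, b, q) ∈ B.trans → (φ p, b, φ q) ∈ T.trans

/-- Isomorphism of block automata. -/
def Isomorphic {Q₁ Q₂ : Type} (B : BlockAutomaton α Q₁) (C : BlockAutomaton α Q₂) : Prop :=
  ∃ φ : Q₁ ≃ Q₂, φ '' B.init = C.init ∧ φ '' B.final = C.final ∧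
    ∀ p b q, ((p, b, q) ∈ B.trans ↔ (φ p, b, φ q) ∈ C.trans)

/-- The substitution of B for the orbit O(q) of A via h (iA is the unique initial
state of A). -/
def substAut {QB : Type} (A : BlockAutomaton α Q) (iA q : Q)
    (B : BlockAutomaton α QB) (h : Q → QB) :
    BlockAutomaton α ({p : Q // p ∉ A.orbitOf q} ⊕ QB) where
  init := {x | (iA ∈ A.orbitOf q ∧ x = Sum.inr (h iA)) ∨
    ∃ hp : iA ∉ A.orbitOf q, x = Sum.inl ⟨iA, hp⟩}
  final := {x | (∃ p, ∃ hp : p ∉ A.orbitOf q, p ∈ A.final ∧ x = Sum.inl ⟨p, hp⟩) ∨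
    ((∃ f ∈ A.final, f ∈ A.orbitOf q) ∧ ∃ fB ∈ B.final, x = Sum.inr fB)}
  trans := {t |
    (∃ p r b, ∃ hp : p ∉ A.orbitOf q, ∃ hr : r ∉ A.orbitOf q,
      (p, b, r) ∈ A.trans ∧ t = (Sum.inl ⟨p, hp⟩, b, Sum.inl ⟨r, hr⟩)) ∨
    (∃ p r b, (p, b, r) ∈ B.trans ∧ t = (Sum.inr p, b, Sum.inr r)) ∨
    (∃ p o b, ∃ hp : p ∉ A.orbitOf q,
      (p, b, o) ∈ A.trans ∧ o ∈ A.orbitOf q ∧ t = (Sum.inl ⟨p, hp⟩, b, Sum.inr (h o))) ∨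
    (∃ fB o p b, ∃ hp : p ∉ A.orbitOf q, fB ∈ B.final ∧
      (o, b, p) ∈ A.trans ∧ o ∈ A.orbitOf q ∧ t = (Sum.inr fB, b, Sum.inl ⟨p, hp⟩))}

end BlockAutomaton

namespace BlockAutomaton

variable {α Q : Type}

lemma myPrefix_or_prefix {l₁ l₂ l₃ : List α} (h1 : l₁ <+: l₃) (h2 : l₂ <+: l₃) :
    l₁ <+: l₂ ∨ l₂ <+: l₁ := by
  rcases le_total l₁.length l₂.length with h | h
  · left
    rw [List.prefix_iff_eq_take.mp h1, List.prefix_iff_eq_take.mp h2]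
    exact List.take_prefix_take_left h
  · right
    rw [List.prefix_iff_eq_take.mp h1, List.prefix_iff_eq_take.mp h2]
    exact List.take_prefix_take_left h

lemma Path.append' {A : BlockAutomaton α Q} {p r s : Q} {x y : List α}
    (h1 : A.Path p x r) (h2 : A.Path r y s) : A.Path p (x ++ y) s := by
  induction h1 with
  | refl p => simpa using h2
  | step hb _ ih => rw [List.append_assoc]; exact Path.step hb (ih h2)

lemma path_cases {A : BlockAutomaton α Q} {p : Q} {x : List α} {r : Q} (h : A.Path p x r) :
    (x = [] ∧ r = p) ∨ ∃ b m u, x = b ++ u ∧ (p, b, m) ∈ A.trans ∧ A.Path m u r := by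
  cases h with
  | refl => exact Or.inl ⟨rfl, rfl⟩
  | step hb h' => exact Or.inr ⟨_, _, _, rfl, hb, h'⟩

lemma path_nil {A : BlockAutomaton α Q}
    (hwf : ∀ t ∈ A.trans, t.2.1 ≠ ([] : List α)) {p r : Q} (h : A.Path p [] r) : r = p := by
  rcases path_cases h with ⟨-, rfl⟩ | ⟨b, m, u, hbu, hb, -⟩
  · rfl
  · exact absurd (List.append_eq_nil_iff.mp hbu.symm).1 (hwf _ hb)

/-- Determinism chain lemma: two runs from the same state on prefixes of a common
word are comparable. -/
lemma chain {A : BlockAutomaton α Q}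
    (hdet : ∀ p b₁ q₁ b₂ q₂, (p, b₁, q₁) ∈ A.trans → (p, b₂, q₂) ∈ A.trans →
      (b₁, q₁) ≠ (b₂, q₂) → ¬ b₁ <+: b₂) :
    ∀ {p x r}, A.Path p x r → ∀ {y s z}, A.Path p y s → x <+: z → y <+: z →
      (∃ t, y = x ++ t ∧ A.Path r t s) ∨ (∃ t, x = y ++ t ∧ A.Path s t r) := by
  intro p x r h1
  induction h1 with
  | refl p =>
    intro y s z h2 _ _
    exact Or.inl ⟨y, rfl, h2⟩
  | @step p m rend b u hb h1' ih =>
    intro y s z h2 hxz hyz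
    rcases path_cases h2 with ⟨rfl, rfl⟩ | ⟨b₂, m₂, u₂, rfl, hb₂, h2'⟩
    · exact Or.inr ⟨b ++ u, rfl, Path.step hb h1'⟩
    · have hbz : b <+: z := (List.prefix_append b u).trans hxz
      have hb₂z : b₂ <+: z := (List.prefix_append b₂ u₂).trans hyz
      have heq : b = b₂ ∧ m = m₂ := by
        by_contra hne
        have hne' : (b, m) ≠ (b₂, m₂) := by
          intro h
          injection h with h1 h2
          exact hne ⟨h1, h2⟩
        rcases myPrefix_or_prefix hbz hb₂z with h | h
        · exact hdet p b m b₂ m₂ hb hb₂ hne' h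
        · exact hdet p b₂ m₂ b m hb₂ hb (Ne.symm hne') h
      obtain ⟨rfl, rfl⟩ := heq
      obtain ⟨w1, hw1⟩ := hxz
      have huz : u <+: u ++ w1 := List.prefix_append u w1
      have hu₂z : u₂ <+: u ++ w1 := by
        have : b ++ u₂ <+: b ++ (u ++ w1) := by
          rw [← List.append_assoc, hw1]; exact hyz
        exact (List.prefix_append_right_inj b).mp this
      rcases ih h2' huz hu₂z with ⟨t, rfl, hp⟩ | ⟨t, hteq, hp⟩
      · exact Or.inl ⟨t, by rw [List.append_assoc], hp⟩
      · exact Or.inr ⟨t, by rw [hteq, List.append_assoc], hp⟩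

/-- Chain lemma, prefix-ordered version. -/
lemma chain_le' {A : BlockAutomaton α Q}
    (hwf : ∀ t ∈ A.trans, t.2.1 ≠ ([] : List α))
    (hdet : ∀ p b₁ q₁ b₂ q₂, (p, b₁, q₁) ∈ A.trans → (p, b₂, q₂) ∈ A.trans →
      (b₁, q₁) ≠ (b₂, q₂) → ¬ b₁ <+: b₂)
    {p : Q} {x y : List α} {r s : Q} (h1 : A.Path p x r) (h2 : A.Path p y s)
    (hxy : x <+: y) : ∃ t, y = x ++ t ∧ A.Path r t s := by
  rcases chain hdet h1 h2 hxy List.prefix_rfl with ⟨t, rfl, hp⟩ | ⟨t, hteq, hp⟩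
  · exact ⟨t, rfl, hp⟩
  · have hlen := hxy.length_le
    have hlen2 : x.length = y.length + t.length := by rw [hteq, List.length_append]
    have ht : t = [] := List.length_eq_zero_iff.mp (by omega)
    subst ht
    rw [List.append_nil] at hteq
    subst hteq
    have := path_nil hwf hp
    subst this
    exact ⟨[], by simp, Path.refl r⟩

lemma internal_sub {A : BlockAutomaton α Q} {R : Set Q} :
    (A.internalAut R).trans ⊆ A.trans := fun _ ht => ht.1

lemma path_mono {A B : BlockAutomaton α Q} (h : A.trans ⊆ B.trans)
    {p : Q} {x : List α} {r : Q} (hp : A.Path p x r) : B.Path p x r := by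
  induction hp with
  | refl p => exact Path.refl p
  | step hb _ ih => exact Path.step (h hb) ih

/-- Splitting an accepting run from a state of `R` at the first exit/acceptance. -/
lemma split {A : BlockAutomaton α Q} {R : Set Q} :
    ∀ {r : Q} {m : List α} {f : Q}, A.Path r m f → r ∈ R → f ∈ A.final →
    ∃ u v g, m = u ++ v ∧ A.IsGate R g ∧ (A.internalAut R).Path r u g ∧ v ∈ A.Lext R g := by
  intro r m f h
  induction h with
  | refl p =>
    intro hr hf
    exact ⟨[], [], p, rfl, ⟨hr, Or.inl hf⟩, Path.refl p, Or.inl ⟨hf, rfl⟩⟩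
  | @step p mid fend b u hb h' ih =>
    intro hr hf
    by_cases hmid : mid ∈ R
    · obtain ⟨u', v, g, hsplit, hg, hip, hv⟩ := ih hmid hf
      refine ⟨b ++ u', v, g, ?_, hg, Path.step ⟨hb, hr, hmid⟩ hip, hv⟩
      rw [hsplit, List.append_assoc]
    · exact ⟨[], b ++ u, p, rfl, ⟨hr, Or.inr ⟨b, mid, hb, hmid⟩⟩, Path.refl p,
        Or.inr ⟨b, mid, hb, hmid, u, ⟨fend, hf, h'⟩, rfl⟩⟩

lemma compose {A : BlockAutomaton α Q} {R : Set Q} {p : Q} {u : List α} {g : Q} {v : List α}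
    (hip : (A.internalAut R).Path p u g) (hv : v ∈ A.Lext R g) :
    (u ++ v) ∈ A.rightLang p := by
  have hp : A.Path p u g := path_mono internal_sub hip
  rcases hv with ⟨hgf, rfl⟩ | ⟨b, s, hb, _, v₀, ⟨f, hf, hps⟩, rfl⟩
  · exact ⟨g, hgf, by simpa using hp⟩
  · exact ⟨f, hf, hp.append' (Path.step hb hps)⟩

lemma lext_transfer {A : BlockAutomaton α Q} {R : Set Q} (htr : A.Transverse R)
    {g₁ g₂ : Q} (h1 : A.IsGate R g₁) (h2 : A.IsGate R g₂) {v : List α}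
    (hv : v ∈ A.Lext R g₁) : v ∈ A.Lext R g₂ := by
  rcases hv with ⟨hgf, rfl⟩ | ⟨b, s, hb, hs, v₀, hv₀, rfl⟩
  · exact Or.inl ⟨(htr g₁ g₂ h1 h2).1.mp hgf, rfl⟩
  · exact Or.inr ⟨b, s, ((htr g₁ g₂ h1 h2).2 b s hs).mp hb, hs, v₀, hv₀, rfl⟩

/-- A gate cannot both continue internally and have an out-transition on prefixes of
the same word. -/
lemma noexit {A : BlockAutomaton α Q} {R : Set Q}
    (hdet : ∀ p b₁ q₁ b₂ q₂, (p, b₁, q₁) ∈ A.trans → (p, b₂, q₂) ∈ A.trans →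
      (b₁, q₁) ≠ (b₂, q₂) → ¬ b₁ <+: b₂)
    {g : Q} {t : List α} {g' : Q} {e : List α}
    (hpath : (A.internalAut R).Path g t g') (ht : t ≠ []) (he : e ∈ A.Lext R g)
    (hte : t <+: e) : False := by
  rcases path_cases hpath with ⟨h0, -⟩ | ⟨ℓ, x, t₀, rfl, hℓ, -⟩
  · exact ht h0
  · rcases he with ⟨-, rfl⟩ | ⟨b, s, hb, hs, v₀, -, rfl⟩
    · exact ht (List.eq_nil_of_prefix_nil hte)
    · have hℓA : (g, ℓ, x) ∈ A.trans := hℓ.1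
      have hxR : x ∈ R := hℓ.2.2
      have h1 : ℓ <+: b ++ v₀ := (List.prefix_append ℓ t₀).trans hte
      have h2 : b <+: b ++ v₀ := List.prefix_append b v₀
      have hne : (ℓ, x) ≠ (b, s) := by
        intro h
        injection h with h1 h2
        exact hs (h2 ▸ hxR)
      rcases myPrefix_or_prefix h1 h2 with h | h
      · exact hdet g ℓ x b s hℓA hb hne h
      · exact hdet g b s ℓ x hb hℓA (Ne.symm hne) h

end BlockAutomaton

namespace BlockAutomaton

variable {α Q : Type}

/-- Descent lemma: the alternating strictly-decreasing configuration is impossible. -/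
lemma descent {A : BlockAutomaton α Q} {R : Set Q}
    (hwf : ∀ t ∈ A.trans, t.2.1 ≠ ([] : List α))
    (hdet : ∀ p b₁ q₁ b₂ q₂, (p, b₁, q₁) ∈ A.trans → (p, b₂, q₂) ∈ A.trans →
      (b₁, q₁) ≠ (b₂, q₂) → ¬ b₁ <+: b₂)
    (htr : A.Transverse R) {v : List α}
    (hvK : ∃ g, A.IsGate R g ∧ v ∈ A.Lext R g)
    (hmin : ∀ v' g', A.IsGate R g' → v' ∈ A.Lext R g' → v.length ≤ v'.length) :
    ∀ (n : ℕ) (p q : Q), p ∈ R → q ∈ R → A.rightLang p = A.rightLang q →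
      ∀ (c t : List α), c.length < n → c ∈ A.Lin R p → t ≠ [] → (c ++ t) ∈ A.Lin R q →
      (∃ g, A.IsGate R g ∧ (t ++ v) ∈ A.Lext R g) → False := by
  have hwfI : ∀ t ∈ (A.internalAut R).trans, t.2.1 ≠ ([] : List α) :=
    fun t ht => hwf t ht.1
  have hdetI : ∀ p b₁ q₁ b₂ q₂, (p, b₁, q₁) ∈ (A.internalAut R).trans →
      (p, b₂, q₂) ∈ (A.internalAut R).trans → (b₁, q₁) ≠ (b₂, q₂) → ¬ b₁ <+: b₂ :=
    fun p b₁ q₁ b₂ q₂ h1 h2 => hdet p b₁ q₁ b₂ q₂ h1.1 h2.1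
  intro n
  induction n with
  | zero => intro p q _ _ _ c t hlen; exact absurd hlen (Nat.not_lt_zero _)
  | succ n ih =>
    intro p q hp hq hpq c t hlen hc ht hct hgt
    obtain ⟨gc, hgc, hpc⟩ := hc
    obtain ⟨gv, hgv, hvgv⟩ := hvK
    -- the "equal" case is impossible
    have hfalse_eq : ∀ gd, A.IsGate R gd → (A.internalAut R).Path q c gd → False := by
      intro gd hgd hpd
      obtain ⟨g', hg', hpct⟩ := hct
      obtain ⟨t', hteq, hpt⟩ :=
        chain_le' hwfI hdetI hpd hpct ⟨t, rfl⟩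
      have ht' : t' = t := (List.append_cancel_left hteq.symm)
      rw [ht'] at hpt
      obtain ⟨gt, hgtg, htv⟩ := hgt
      exact noexit hdet hpt ht (lext_transfer htr hgtg hgd htv) (List.prefix_append t v)
    have h1 : (c ++ v) ∈ A.rightLang p :=
      compose hpc (lext_transfer htr hgv hgc hvgv)
    rw [hpq] at h1
    obtain ⟨f, hf, hpath⟩ := h1
    obtain ⟨d, v₄, gd, heq, hgd, hpd, hv₄⟩ := split hpath hq hf
    have hdpre : d <+: c ++ v := ⟨v₄, heq.symm⟩
    have hcpre : c <+: c ++ v := List.prefix_append c v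
    rcases myPrefix_or_prefix hdpre hcpre with hdc | hcd
    · -- c = d ++ e
      obtain ⟨e, rfl⟩ := hdc
      by_cases he : e = []
      · subst he
        exact hfalse_eq gd hgd (by simpa using hpd)
      · -- v₄ = e ++ v, recurse with roles swapped
        have hv₄eq : v₄ = e ++ v := by
          rw [List.append_assoc] at heq
          exact (List.append_cancel_left heq).symm
        have hlen' : d.length < n := by
          have h1 : (d ++ e).length = d.length + e.length := List.length_append
          have h2 : e.length ≠ 0 := fun h0 => he (List.length_eq_zero_iff.mp h0)
          omega
        exact ih q p hq hp hpq.symm d e hlen' ⟨gd, hgd, hpd⟩ he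
          ⟨gc, hgc, hpc⟩ ⟨gd, hgd, hv₄eq ▸ hv₄⟩
    · -- d = c ++ e
      obtain ⟨e, rfl⟩ := hcd
      by_cases he : e = []
      · subst he
        rw [List.append_nil] at hpd
        exact hfalse_eq gd hgd hpd
      · -- v = e ++ v₄ contradicts minimality of v
        have hveq : v = e ++ v₄ := by
          rw [List.append_assoc] at heq
          exact List.append_cancel_left heq
        have hm := hmin v₄ gd hgd hv₄
        have h1 : v.length = e.length + v₄.length := by rw [hveq, List.length_append]
        have h2 : e.length ≠ 0 := fun h0 => he (List.length_eq_zero_iff.mp h0)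
        omega

/-- Main lemma, forward direction: same right language implies same internal language. -/
lemma lin_sub {A : BlockAutomaton α Q} (hwf0 : A.IsWF) (htrim : A.Trim)
    (hdet0 : A.Deterministic) {R : Set Q} (htr : A.Transverse R)
    {p q : Q} (hp : p ∈ R) (hq : q ∈ R) (hpq : A.rightLang p = A.rightLang q) :
    ∀ w, w ∈ A.Lin R p → w ∈ A.Lin R q := by
  have hwf := hwf0.2
  have hdet := hdet0.2
  intro w hw
  obtain ⟨g₁, hg₁, hw1⟩ := hw
  -- the common external language is nonempty
  have hKne : ∃ v g, A.IsGate R g ∧ v ∈ A.Lext R g := by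
    obtain ⟨-, f, hf, m, hm⟩ := htrim g₁
    obtain ⟨u, v, g, -, hg, -, hv⟩ := split hm hg₁.1 hf
    exact ⟨v, g, hg, hv⟩
  -- choose a minimal-length element
  set S : Set ℕ := {n | ∃ v g, A.IsGate R g ∧ v ∈ A.Lext R g ∧ v.length = n} with hS
  have hSne : S.Nonempty := by
    obtain ⟨v, g, hg, hv⟩ := hKne
    exact ⟨v.length, v, g, hg, hv, rfl⟩
  obtain ⟨v, gv, hgv, hvv, hlenv⟩ := Nat.sInf_mem hSne
  have hmin : ∀ v' g', A.IsGate R g' → v' ∈ A.Lext R g' → v.length ≤ v'.length := by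
    intro v' g' hg' hv'
    rw [hlenv]
    exact Nat.sInf_le ⟨v', g', hg', hv', rfl⟩
  -- w ++ v ∈ rightLang q, split there
  have h1 : (w ++ v) ∈ A.rightLang p :=
    compose hw1 (lext_transfer htr hgv hg₁ hvv)
  rw [hpq] at h1
  obtain ⟨f, hf, hpath⟩ := h1
  obtain ⟨u, v', g₂, heq, hg₂, hpu, hv'⟩ := split hpath hq hf
  have hupre : u <+: w ++ v := ⟨v', heq.symm⟩
  have hwpre : w <+: w ++ v := List.prefix_append w v
  rcases myPrefix_or_prefix hupre hwpre with huw | hwu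
  · -- w = u ++ z
    obtain ⟨z, rfl⟩ := huw
    by_cases hz : z = []
    · subst hz
      rw [List.append_nil]
      exact ⟨g₂, hg₂, by simpa using hpu⟩
    · exfalso
      have hv'eq : v' = z ++ v := by
        rw [List.append_assoc] at heq
        exact (List.append_cancel_left heq).symm
      exact descent hwf hdet htr ⟨gv, hgv, hvv⟩ hmin (u.length + 1) q p hq hp hpq.symm
        u z (Nat.lt_succ_self _) ⟨g₂, hg₂, hpu⟩ hz ⟨g₁, hg₁, hw1⟩
        ⟨g₂, hg₂, hv'eq ▸ hv'⟩
  · -- u = w ++ z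
    obtain ⟨z, rfl⟩ := hwu
    by_cases hz : z = []
    · subst hz
      rw [List.append_nil] at hpu
      exact ⟨g₂, hg₂, hpu⟩
    · exfalso
      have hveq : v = z ++ v' := by
        rw [List.append_assoc] at heq
        exact List.append_cancel_left heq
      have hm := hmin v' g₂ hg₂ hv'
      have h1 : v.length = z.length + v'.length := by rw [hveq, List.length_append]
      have h2 : z.length ≠ 0 := fun h0 => hz (List.length_eq_zero_iff.mp h0)
      omega

/-- Backward direction: same internal language implies same right language. -/
lemma rl_sub {A : BlockAutomaton α Q} {R : Set Q} (htr : A.Transverse R)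
    {p q : Q} (hp : p ∈ R) (hq : q ∈ R) (hLin : A.Lin R p = A.Lin R q) :
    ∀ w, w ∈ A.rightLang p → w ∈ A.rightLang q := by
  intro w hw
  obtain ⟨f, hf, hpath⟩ := hw
  obtain ⟨u, v, g, rfl, hg, hpu, hv⟩ := split hpath hp hf
  have hu : u ∈ A.Lin R q := hLin ▸ ⟨g, hg, hpu⟩
  obtain ⟨g', hg', hpu'⟩ := hu
  exact compose hpu' (lext_transfer htr hg hg' hv)

end BlockAutomaton

/-- In a trim deterministic block automaton, for a transverse non
re-entering component R and states p, q ∈ R: L(p) = L(q) iff Lin_R(p) = Lin_R(q). -/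
theorem stmt7 {α Q : Type} [Fintype α] [Fintype Q]
    (A : BlockAutomaton α Q) (hwf : A.IsWF) (htrim : A.Trim) (hdet : A.Deterministic)
    (R : Set Q) (hR : A.NonReentering R) (htr : A.Transverse R) :
    ∀ p ∈ R, ∀ q ∈ R, (A.rightLang p = A.rightLang q ↔ A.Lin R p = A.Lin R q) := by
  intro p hp q hq
  constructor
  · intro h
    apply Set.Subset.antisymm
    · exact fun w hw => BlockAutomaton.lin_sub hwf htrim hdet htr hp hq h w hw
    · exact fun w hw => BlockAutomaton.lin_sub hwf htrim hdet htr hq hp h.symm w hw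
  · intro h
    apply Set.Subset.antisymm
    · exact fun w hw => BlockAutomaton.rl_sub htr hp hq h w hw
    · exact fun w hw => BlockAutomaton.rl_sub htr hq hp h.symm w hw
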